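/- Let X be a closed acausal subset of the pseudo-Euclidean space ℝ_{(l,p)} and let a ∈ X. If b_ν ∈ X is a sequence converging to a and x_ν ∈ N(b_ν) converges to some x ∈ ℝ^n, then x ∈ N(a); that is, limsup_{X ∋ b → a} N(b) ⊂ N(a). -/
import Mathlib


open Filter Topology Set

noncomputable section

/-- The pseudo-Euclidean space `ℝ_{(l,p)}`: `ℝ^(l+p)` with the Euclidean topology. -/
abbrev PE (l p : ℕ) := EuclideanSpace ℝ (Fin (l + p))

/-- The quadratic form `Q(x) = ‖x‖_l² − ‖x‖_p²`. -/
def Q (l p : ℕ) (x : PE l p) : ℝ :=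
  ∑ i : Fin (l + p), if (i : ℕ) < l then (x i) ^ 2 else -((x i) ^ 2)

/-- The pseudo-scalar product `⟪x,y⟫ = Σ_{i<l} x_i y_i − Σ_{i≥l} x_i y_i`. -/
def pseudoInner (l p : ℕ) (x y : PE l p) : ℝ :=
  ∑ i : Fin (l + p), if (i : ℕ) < l then x i * y i else -(x i * y i)

/-- `‖x‖_l`: the Euclidean norm of the first `l` coordinates. -/
def normL (l p : ℕ) (x : PE l p) : ℝ :=
  Real.sqrt (∑ i : Fin (l + p), if (i : ℕ) < l then (x i) ^ 2 else 0)

/-- `‖x‖_p`: the Euclidean norm of the last `p` coordinates. -/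
def normP (l p : ℕ) (x : PE l p) : ℝ :=
  Real.sqrt (∑ i : Fin (l + p), if (i : ℕ) < l then 0 else (x i) ^ 2)

/-- `X` is acausal: `Q(x−y) > 0` for all distinct `x, y ∈ X`. -/
def Acausal (l p : ℕ) (X : Set (PE l p)) : Prop :=
  ∀ x ∈ X, ∀ y ∈ X, x ≠ y → 0 < Q l p (x - y)

/-- `X` is `L`-pseudo-Lipschitz: `L‖x−y‖_l ≥ ‖x−y‖_p` for all `x, y ∈ X`. -/
def PseudoLipschitz (l p : ℕ) (L : ℝ) (X : Set (PE l p)) : Prop :=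
  ∀ x ∈ X, ∀ y ∈ X, normP l p (x - y) ≤ L * normL l p (x - y)

/-- The squared-distance function `ρ(a,X) = inf {Q(x−a) : x ∈ X}`. -/
def rho (l p : ℕ) (X : Set (PE l p)) (a : PE l p) : ℝ :=
  sInf ((fun x => Q l p (x - a)) '' X)

/-- The set of closest points `m(a) = {x ∈ X : Q(x−a) = ρ(a,X)}`, via its equivalent
description `m(a) = {x ∈ X : ∀ b ∈ X, Q(x−a) ≤ Q(b−a)}`. -/
def mm (l p : ℕ) (X : Set (PE l p)) (a : PE l p) : Set (PE l p) :=
  {x ∈ X | ∀ b ∈ X, Q l p (x - a) ≤ Q l p (b - a)}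

/-- The medial axis `M_X`: points with at least two closest points in `X`. -/
def medialAxis (l p : ℕ) (X : Set (PE l p)) : Set (PE l p) :=
  {a | (mm l p X a).Nontrivial}

/-- The vacant axis `W_X`: points with no closest point in `X`. -/
def vacantAxis (l p : ℕ) (X : Set (PE l p)) : Set (PE l p) :=
  {a | mm l p X a = ∅}

/-- The normal set `N(a) = {x : a ∈ m(x)}`. -/
def NN (l p : ℕ) (X : Set (PE l p)) (a : PE l p) : Set (PE l p) :=
  {x | a ∈ mm l p X x}

/-- The strict normal set `N'(a) = {x : m(x) = {a}}`. -/
def NN' (l p : ℕ) (X : Set (PE l p)) (a : PE l p) : Set (PE l p) :=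
  {x | mm l p X x = {a}}


lemma Q_continuous (l p : ℕ) : Continuous (Q l p) := by
  unfold Q
  refine continuous_finset_sum _ fun i _ => ?_
  by_cases h : (i : ℕ) < l <;> simp only [h, if_true, if_false] <;>
    fun_prop

/-- For closed acausal `X` and `a ∈ X`: if `X ∋ b_ν → a` and
`N(b_ν) ∋ x_ν → x`, then `x ∈ N(a)`; i.e. `limsup_{X ∋ b → a} N(b) ⊂ N(a)`. -/
theorem limsup_normalSet_subset (l p : ℕ) (hl : 1 ≤ l)
    (X : Set (PE l p)) (hX : IsClosed X) (hac : Acausal l p X)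
    (a : PE l p) (ha : a ∈ X)
    (b : ℕ → PE l p) (hb : ∀ ν, b ν ∈ X) (hba : Tendsto b atTop (𝓝 a))
    (x : ℕ → PE l p) (hx : ∀ ν, x ν ∈ NN l p X (b ν))
    (x₀ : PE l p) (hxx : Tendsto x atTop (𝓝 x₀)) :
    x₀ ∈ NN l p X a := by
  refine ⟨ha, fun c hc => ?_⟩
  have h1 : Tendsto (fun ν => Q l p (b ν - x ν)) atTop (𝓝 (Q l p (a - x₀))) :=
    ((Q_continuous l p).tendsto _).comp (hba.sub hxx)
  have h2 : Tendsto (fun ν => Q l p (c - x ν)) atTop (𝓝 (Q l p (c - x₀))) :=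
    ((Q_continuous l p).tendsto _).comp (tendsto_const_nhds.sub hxx)
  exact le_of_tendsto_of_tendsto' h1 h2 fun ν => (hx ν).2 c hc
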